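/- Let X be a nonempty finite set and r : X × X → X × X an involutive map satisfying the set-theoretic Yang–Baxter equation. For each n ≥ 2 and 1 ≤ k ≤ n−1, let σ_k be the permutation of (Fin n → X) applying r to the pair of coordinates (k−1, k). Then there exists a group homomorphism ρ from the symmetric group Equiv.Perm (Fin n) to Equiv.Perm (Fin n → X) such that ρ sends the adjacent transposition of k−1 and k to σ_k for every 1 ≤ k ≤ n−1. -/

import Mathlib

open Equiv CoxeterSystem



/-- The first leg map `r₁(x,y,z) = (r(x,y).1, r(x,y).2, z)`. -/
def ybeLeg1 {X : Type*} (r : X × X → X × X) : X × X × X → X × X × X :=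
  fun p => ((r (p.1, p.2.1)).1, (r (p.1, p.2.1)).2, p.2.2)

/-- The second leg map `r₂(x,y,z) = (x, r(y,z).1, r(y,z).2)`. -/
def ybeLeg2 {X : Type*} (r : X × X → X × X) : X × X × X → X × X × X :=
  fun p => (p.1, r p.2)

/-- The set-theoretic Yang–Baxter equation. -/
def SetTheoreticYBE {X : Type*} (r : X × X → X × X) : Prop :=
  ybeLeg1 r ∘ ybeLeg2 r ∘ ybeLeg1 r = ybeLeg2 r ∘ ybeLeg1 r ∘ ybeLeg2 r

/-- The map `σ_k` applying `r` to the coordinates `k-1, k` (0-indexed) of a word in `Fin n → X`,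
for `1 ≤ k ≤ n - 1`; it is the identity outside this range of `k`. -/
def sigmaMap {X : Type*} [DecidableEq X] (r : X × X → X × X) (n k : ℕ) (f : Fin n → X) :
    Fin n → X :=
  if h : 1 ≤ k ∧ k < n then
    fun j =>
      if j = (⟨k - 1, by omega⟩ : Fin n) then (r (f ⟨k - 1, by omega⟩, f ⟨k, h.2⟩)).1
      else if j = (⟨k, h.2⟩ : Fin n) then (r (f ⟨k - 1, by omega⟩, f ⟨k, h.2⟩)).2
      else f j
  else f




namespace YbeAux

variable {G : Type*} [Group G]

lemma expand3 (a b : G) : (a * b) ^ 3 = (a * b * a) * (b * a * b) := by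
  rw [pow_succ, pow_succ, pow_one]; simp only [mul_assoc]

lemma sq_of_sq (a b : G) (ha : a * a = 1) (hb : b * b = 1) :
    (b * a * b) * (b * a * b) = 1 := by
  have h1 : (b * a * b) * (b * a * b) = b * a * (b * b) * (a * b) := by
    simp only [mul_assoc]
  rw [h1, hb, mul_one]
  have h2 : b * a * (a * b) = b * (a * a) * b := by simp only [mul_assoc]
  rw [h2, ha, mul_one, hb]

lemma braid_of_cube (a b : G) (ha : a * a = 1) (hb : b * b = 1) (h : (a * b) ^ 3 = 1) :
    a * b * a = b * a * b := by
  have h1 : (a * b * a) * (b * a * b) = 1 := by rw [← expand3]; exact h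
  have h2 : b * a * b = (b * a * b)⁻¹ := eq_inv_of_mul_eq_one_right (sq_of_sq a b ha hb)
  calc a * b * a = (b * a * b)⁻¹ := eq_inv_of_mul_eq_one_left h1
  _ = b * a * b := h2.symm

lemma cube_of_braid (a b : G) (ha : a * a = 1) (hb : b * b = 1) (h : a * b * a = b * a * b) :
    (a * b) ^ 3 = 1 := by
  rw [expand3, h]
  exact sq_of_sq a b ha hb

lemma comm_of_sq (a b : G) (ha : a * a = 1) (hb : b * b = 1) (h : (a * b) ^ 2 = 1) :
    a * b = b * a := by
  have h' := h
  rw [pow_two] at h'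
  have hainv : a⁻¹ = a := inv_eq_of_mul_eq_one_right ha
  have hbinv : b⁻¹ = b := inv_eq_of_mul_eq_one_right hb
  calc a * b = (a * b)⁻¹ := eq_inv_of_mul_eq_one_left h'
  _ = b⁻¹ * a⁻¹ := mul_inv_rev _ _
  _ = b * a := by rw [hainv, hbinv]

lemma sq_of_comm (a b : G) (ha : a * a = 1) (hb : b * b = 1) (h : a * b = b * a) :
    (a * b) ^ 2 = 1 := by
  calc (a * b) ^ 2 = a * (b * a) * b := by rw [pow_two]; simp only [mul_assoc]
  _ = a * (a * b) * b := by rw [← h]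
  _ = (a * a) * (b * b) := by simp only [mul_assoc]
  _ = 1 := by rw [ha, hb, mul_one]

lemma isLiftable_A {m : ℕ} (g : Fin m → G)
    (h1 : ∀ i, g i * g i = 1)
    (h2 : ∀ i j : Fin m, (i : ℕ) + 1 = (j : ℕ) → g i * g j * g i = g j * g i * g j)
    (h3 : ∀ i j : Fin m, (i : ℕ) + 1 < (j : ℕ) → g i * g j = g j * g i) :
    (CoxeterMatrix.Aₙ m).IsLiftable g := by
  intro i j
  show (g i * g j) ^ ((CoxeterMatrix.Aₙ m).M i j) = 1
  show (g i * g j) ^ (if i = j then 1 else if (j : ℕ) + 1 = i ∨ (i : ℕ) + 1 = j then 3 else 2) = 1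
  split_ifs with hEq hAdj
  · subst hEq; rw [pow_one]; exact h1 i
  · rcases hAdj with hji | hij
    · exact cube_of_braid _ _ (h1 i) (h1 j) (h2 j i hji).symm
    · exact cube_of_braid _ _ (h1 i) (h1 j) (h2 i j hij)
  · have hne : (i : ℕ) ≠ (j : ℕ) := fun h => hEq (Fin.ext h)
    have hc : (i : ℕ) + 1 < j ∨ (j : ℕ) + 1 < i := by omega
    rcases hc with h | h
    · exact sq_of_comm _ _ (h1 i) (h1 j) (h3 i j h)
    · exact sq_of_comm _ _ (h1 i) (h1 j) (h3 j i h).symm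

end YbeAux
open Equiv CoxeterSystem

namespace YbeAux
variable {α : Type*} [DecidableEq α]

lemma conj_swap_self (s : Perm α) (hs : s * s = 1) (x y : α) :
    s * swap x y * s = swap (s x) (s y) := by
  have hinv : s⁻¹ = s := inv_eq_of_mul_eq_one_right hs
  rw [Equiv.swap_apply_apply, hinv]

lemma swap_braid {x y z : α} (hxy : x ≠ y) (hyz : y ≠ z) (hxz : x ≠ z) :
    swap x y * swap y z * swap x y = swap y z * swap x y * swap y z := by
  have h1 := conj_swap_self (swap x y) (Equiv.swap_mul_self x y) y z
  have h2 := conj_swap_self (swap y z) (Equiv.swap_mul_self y z) x y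
  rw [Equiv.swap_apply_right, Equiv.swap_apply_of_ne_of_ne hxz.symm hyz.symm] at h1
  rw [Equiv.swap_apply_of_ne_of_ne hxy hxz, Equiv.swap_apply_left] at h2
  rw [h1, h2]

lemma swap_comm_far {x y u v : α} (hxu : x ≠ u) (hxv : x ≠ v) (hyu : y ≠ u) (hyv : y ≠ v) :
    swap x y * swap u v = swap u v * swap x y := by
  have h1 := conj_swap_self (swap x y) (Equiv.swap_mul_self x y) u v
  rw [Equiv.swap_apply_of_ne_of_ne hxu.symm hyu.symm,
    Equiv.swap_apply_of_ne_of_ne hxv.symm hyv.symm] at h1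
  calc swap x y * swap u v = swap x y * swap u v * (swap x y * swap x y) := by
        rw [Equiv.swap_mul_self, mul_one]
  _ = (swap x y * swap u v * swap x y) * swap x y := by simp only [mul_assoc]
  _ = swap u v * swap x y := by rw [h1]

lemma swapLiftable (m : ℕ) :
    (CoxeterMatrix.Aₙ m).IsLiftable (fun i : Fin m => swap i.castSucc i.succ) := by
  apply isLiftable_A
  · intro i; exact Equiv.swap_mul_self _ _
  · intro i j hij
    have hsucc : i.succ = j.castSucc := by
      apply Fin.ext; simp [hij]
    rw [hsucc]
    apply swap_braid <;> (apply Fin.ne_of_val_ne; simp only [Fin.coe_castSucc, Fin.val_succ]; omega)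
  · intro i j hij
    apply swap_comm_far <;> (apply Fin.ne_of_val_ne; simp only [Fin.coe_castSucc, Fin.val_succ]; omega)

/-- The canonical homomorphism from the type-A Coxeter group to the symmetric group. -/
def phi (m : ℕ) : (CoxeterMatrix.Aₙ m).Group →* Perm (Fin (m + 1)) :=
  (CoxeterMatrix.Aₙ m).toCoxeterSystem.lift
    ⟨fun i : Fin m => swap i.castSucc i.succ, swapLiftable m⟩

lemma phi_simple (m : ℕ) (i : Fin m) :
    phi m ((CoxeterMatrix.Aₙ m).simple i) = swap i.castSucc i.succ :=
  (CoxeterMatrix.Aₙ m).toCoxeterSystem.lift_apply_simple (swapLiftable m) i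

lemma aM_eq_three {m : ℕ} {i j : Fin m} (h : (i : ℕ) + 1 = j) :
    (CoxeterMatrix.Aₙ m).M i j = 3 := by
  show (if i = j then 1 else if (j : ℕ) + 1 = i ∨ (i : ℕ) + 1 = j then 3 else 2) = 3
  rw [if_neg (fun he => by rw [he] at h; omega), if_pos (Or.inr h)]

lemma aM_eq_two {m : ℕ} {i j : Fin m} (h : (i : ℕ) + 1 < j ∨ (j : ℕ) + 1 < i) :
    (CoxeterMatrix.Aₙ m).M i j = 2 := by
  show (if i = j then 1 else if (j : ℕ) + 1 = i ∨ (i : ℕ) + 1 = j then 3 else 2) = 2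
  rw [if_neg (fun he => by rw [he] at h; omega), if_neg (by omega)]

lemma simple_sq {m : ℕ} (i : Fin m) :
    (CoxeterMatrix.Aₙ m).simple i * (CoxeterMatrix.Aₙ m).simple i = 1 :=
  (CoxeterMatrix.Aₙ m).toCoxeterSystem.simple_mul_simple_self i

lemma simple_braid {m : ℕ} {i j : Fin m} (h : (i : ℕ) + 1 = j) :
    (CoxeterMatrix.Aₙ m).simple i * (CoxeterMatrix.Aₙ m).simple j * (CoxeterMatrix.Aₙ m).simple i
      = (CoxeterMatrix.Aₙ m).simple j * (CoxeterMatrix.Aₙ m).simple i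
        * (CoxeterMatrix.Aₙ m).simple j := by
  apply braid_of_cube _ _ (simple_sq i) (simple_sq j)
  have := (CoxeterMatrix.Aₙ m).toCoxeterSystem.simple_mul_simple_pow i j
  rwa [aM_eq_three h] at this

lemma simple_comm {m : ℕ} {i j : Fin m} (h : (i : ℕ) + 1 < j ∨ (j : ℕ) + 1 < i) :
    (CoxeterMatrix.Aₙ m).simple i * (CoxeterMatrix.Aₙ m).simple j
      = (CoxeterMatrix.Aₙ m).simple j * (CoxeterMatrix.Aₙ m).simple i := by
  apply comm_of_sq _ _ (simple_sq i) (simple_sq j)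
  have := (CoxeterMatrix.Aₙ m).toCoxeterSystem.simple_mul_simple_pow i j
  rwa [aM_eq_two h] at this

/-- `sN m j` is the `j`-th simple reflection (as a natural number index),
or `1` if out of range. -/
def sN (m : ℕ) (j : ℕ) : (CoxeterMatrix.Aₙ m).Group :=
  if h : j < m then (CoxeterMatrix.Aₙ m).simple ⟨j, h⟩ else 1

lemma sN_sq (m j : ℕ) : sN m j * sN m j = 1 := by
  rw [sN]; split_ifs with h
  · exact simple_sq _
  · rw [mul_one]

lemma sN_comm {m : ℕ} {j l : ℕ} (h : j + 1 < l) : sN m j * sN m l = sN m l * sN m j := by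
  rw [sN, sN]
  split_ifs with h1 h2 h2
  · exact simple_comm (Or.inl (by simpa using h))
  · rw [mul_one, one_mul]
  · rw [mul_one, one_mul]
  · rw [mul_one]

lemma sN_braid {m : ℕ} {j : ℕ} (h : j + 1 < m) :
    sN m j * sN m (j + 1) * sN m j = sN m (j + 1) * sN m j * sN m (j + 1) := by
  rw [sN, sN, dif_pos (by omega : j < m), dif_pos h]
  exact simple_braid rfl

/-- `cElt m k j = s_j s_{j+1} ⋯ s_{j+k-1}`. -/
def cElt (m : ℕ) : ℕ → ℕ → (CoxeterMatrix.Aₙ m).Group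
  | 0, _ => 1
  | k + 1, j => sN m j * cElt m k (j + 1)

lemma sN_comm_cElt {m : ℕ} (i : ℕ) (k : ℕ) :
    ∀ j, i + 1 < j → sN m i * cElt m k j = cElt m k j * sN m i := by
  induction k with
  | zero => intro j _; rw [cElt, mul_one, one_mul]
  | succ k ih =>
    intro j hij
    rw [cElt, ← mul_assoc, sN_comm hij, mul_assoc, ih (j + 1) (by omega), ← mul_assoc]

lemma sN_mul_cElt {m : ℕ} (k : ℕ) :
    ∀ j i, j < i → i < j + k → i < m →
      sN m i * cElt m k j = cElt m k j * sN m (i - 1) := by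
  induction k with
  | zero => intro j i h1 h2 _; omega
  | succ k ih =>
    intro j i h1 h2 him
    rw [cElt]
    rcases Nat.lt_or_ge (j + 1) i with hgt | hle
    · -- i > j + 1 : commute past s_j, then induct
      rw [← mul_assoc, ← sN_comm hgt, mul_assoc, ih (j + 1) i hgt (by omega) him, ← mul_assoc]
    · -- i = j + 1
      have hij : i = j + 1 := by omega
      subst hij
      have hk : 1 ≤ k := by omega
      obtain ⟨k', rfl⟩ : ∃ k', k = k' + 1 := ⟨k - 1, by omega⟩
      rw [cElt]
      -- goal: sN (j+1) * (sN j * (sN (j+1) * cElt k' (j+2))) = ...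
      calc sN m (j + 1) * (sN m j * (sN m (j + 1) * cElt m k' (j + 2)))
          = (sN m (j + 1) * sN m j * sN m (j + 1)) * cElt m k' (j + 2) := by
            simp only [mul_assoc]
        _ = (sN m j * sN m (j + 1) * sN m j) * cElt m k' (j + 2) := by
            rw [← sN_braid (by omega)]
        _ = sN m j * sN m (j + 1) * (sN m j * cElt m k' (j + 2)) := by
            simp only [mul_assoc]
        _ = sN m j * sN m (j + 1) * (cElt m k' (j + 2) * sN m j) := by
            rw [sN_comm_cElt j k' (j + 2) (by omega)]
        _ = sN m j * (sN m (j + 1) * cElt m k' (j + 2)) * sN m (j + 1 - 1) := by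
            simp only [Nat.add_sub_cancel, mul_assoc]

lemma aM_castSucc (m : ℕ) (i j : Fin m) :
    (CoxeterMatrix.Aₙ (m + 1)).M i.castSucc j.castSucc = (CoxeterMatrix.Aₙ m).M i j := by
  show (if i.castSucc = j.castSucc then 1
      else if (j.castSucc : ℕ) + 1 = i.castSucc ∨ (i.castSucc : ℕ) + 1 = j.castSucc then 3 else 2)
    = (if i = j then 1 else if (j : ℕ) + 1 = i ∨ (i : ℕ) + 1 = j then 3 else 2)
  simp only [Fin.castSucc_inj, Fin.coe_castSucc]

/-- The canonical inclusion of consecutive type-A Coxeter groups. -/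
def iota (m : ℕ) : (CoxeterMatrix.Aₙ m).Group →* (CoxeterMatrix.Aₙ (m + 1)).Group :=
  (CoxeterMatrix.Aₙ m).toCoxeterSystem.lift
    ⟨fun i : Fin m => (CoxeterMatrix.Aₙ (m + 1)).simple i.castSucc, by
      intro i j
      rw [← aM_castSucc m i j]
      exact (CoxeterMatrix.Aₙ (m + 1)).toCoxeterSystem.simple_mul_simple_pow _ _⟩

lemma iota_simple (m : ℕ) (i : Fin m) :
    iota m ((CoxeterMatrix.Aₙ m).simple i) = (CoxeterMatrix.Aₙ (m + 1)).simple i.castSucc :=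
  (CoxeterMatrix.Aₙ m).toCoxeterSystem.lift_apply_simple _ i

lemma decomp (m : ℕ) (w : (CoxeterMatrix.Aₙ (m + 1)).Group) :
    ∃ j : ℕ, j ≤ m + 1 ∧ ∃ w' : (CoxeterMatrix.Aₙ m).Group,
      w = cElt (m + 1) (m + 1 - j) j * iota m w' := by
  induction w using (CoxeterMatrix.Aₙ (m + 1)).toCoxeterSystem.simple_induction_left with
  | one => exact ⟨m + 1, le_refl _, 1, by rw [Nat.sub_self, cElt, map_one, one_mul]⟩
  | mul_simple_left w i hw =>
    obtain ⟨j, hj, w', rfl⟩ := hw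
    have hs : (CoxeterMatrix.Aₙ (m + 1)).toCoxeterSystem.simple i = sN (m + 1) (i : ℕ) := by
      rw [sN, dif_pos i.isLt, Fin.eta]; rfl
    rw [hs, ← mul_assoc]
    rcases Nat.lt_or_ge ((i : ℕ) + 1) j with hlt | hge
    · -- far below: s_i commutes with cElt and goes into iota
      have him : (i : ℕ) < m := by omega
      refine ⟨j, hj, (CoxeterMatrix.Aₙ m).simple ⟨i, him⟩ * w', ?_⟩
      rw [sN_comm_cElt _ _ _ hlt, map_mul, iota_simple, mul_assoc]
      congr 2
      rw [sN, dif_pos (by omega : (i : ℕ) < m + 1)]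
      congr 1
    · rcases Nat.eq_or_lt_of_le hge with heq | hgt
      · -- i + 1 = j : prepend
        refine ⟨(i : ℕ), by omega, w', ?_⟩
        have harith : m + 1 - (i : ℕ) = (m + 1 - j) + 1 := by omega
        rw [harith, cElt, ← heq]
      · rcases Nat.lt_or_ge (i : ℕ) j with hc | hc
        · omega
        rcases Nat.eq_or_lt_of_le hc with heq2 | hgt2
        · -- i = j : cancel
          refine ⟨j + 1, by omega, w', ?_⟩
          have harith : m + 1 - j = (m + 1 - (j + 1)) + 1 := by omega
          rw [harith, cElt, ← mul_assoc, ← heq2, sN_sq, one_mul]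
        · -- i > j : move across, index drops by one
          have him : (i : ℕ) - 1 < m := by omega
          refine ⟨j, hj, (CoxeterMatrix.Aₙ m).simple ⟨(i : ℕ) - 1, him⟩ * w', ?_⟩
          rw [sN_mul_cElt _ _ _ hgt2 (by omega) (by omega), map_mul, iota_simple, mul_assoc]
          congr 2
          rw [sN, dif_pos (by omega : (i : ℕ) - 1 < m + 1)]
          congr 1

/-- The equivalence between `Fin (m+1)` and the non-last elements of `Fin (m+2)`. -/
def finEquivSubtype (m : ℕ) : Fin (m + 1) ≃ {x : Fin (m + 2) // (x : ℕ) < m + 1} where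
  toFun i := ⟨i.castSucc, i.isLt⟩
  invFun x := ⟨(x : Fin (m + 2)), x.2⟩
  left_inv i := rfl
  right_inv x := Subtype.ext (Fin.ext rfl)

/-- Extension of a permutation of `Fin (m+1)` to `Fin (m+2)` fixing the last element. -/
def emb (m : ℕ) : Perm (Fin (m + 1)) →* Perm (Fin (m + 2)) :=
  Equiv.Perm.extendDomainHom (finEquivSubtype m)

lemma emb_apply_lt (m : ℕ) (π : Perm (Fin (m + 1))) (i : Fin (m + 1)) :
    emb m π i.castSucc = (π i).castSucc := by
  have := Equiv.Perm.extendDomain_apply_image π (finEquivSubtype m) i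
  exact this

lemma emb_apply_last (m : ℕ) (π : Perm (Fin (m + 1))) :
    emb m π (Fin.last (m + 1)) = Fin.last (m + 1) :=
  Equiv.Perm.extendDomain_apply_not_subtype π (finEquivSubtype m) (by simp)

lemma emb_swap (m : ℕ) (a b : Fin (m + 1)) :
    emb m (swap a b) = swap a.castSucc b.castSucc := by
  apply Equiv.ext
  intro x
  rcases Nat.lt_or_ge (x : ℕ) (m + 1) with hx | hx
  · have hxc : x = (⟨(x : ℕ), hx⟩ : Fin (m + 1)).castSucc := Fin.ext rfl
    rw [hxc, emb_apply_lt]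
    rcases eq_or_ne (⟨(x : ℕ), hx⟩ : Fin (m + 1)) a with rfl | ha
    · rw [Equiv.swap_apply_left, Equiv.swap_apply_left]
    rcases eq_or_ne (⟨(x : ℕ), hx⟩ : Fin (m + 1)) b with rfl | hb
    · rw [Equiv.swap_apply_right, Equiv.swap_apply_right]
    rw [Equiv.swap_apply_of_ne_of_ne ha hb,
      Equiv.swap_apply_of_ne_of_ne (fun h => ha (Fin.castSucc_injective _ h))
        (fun h => hb (Fin.castSucc_injective _ h))]
  · have hxl : x = Fin.last (m + 1) := by
      have hlt := x.isLt
      exact Fin.ext (by simp only [Fin.val_last]; omega)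
    rw [hxl, emb_apply_last]
    rw [Equiv.swap_apply_of_ne_of_ne]
    · exact fun h => by have := congrArg Fin.val h; simp [Fin.last] at this; omega
    · exact fun h => by have := congrArg Fin.val h; simp [Fin.last] at this; omega

lemma phi_iota (m : ℕ) : (phi (m + 1)).comp (iota m) = (emb m).comp (phi m) := by
  apply (CoxeterMatrix.Aₙ m).toCoxeterSystem.ext_simple
  intro i
  show phi (m + 1) (iota m ((CoxeterMatrix.Aₙ m).simple i))
    = emb m (phi m ((CoxeterMatrix.Aₙ m).simple i))
  rw [iota_simple, phi_simple, phi_simple, emb_swap]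
  congr 1

lemma phi_cElt (m : ℕ) (k : ℕ) :
    ∀ j (h : j + k ≤ m),
      phi m (cElt m k j) ⟨j + k, by omega⟩ = (⟨j, by omega⟩ : Fin (m + 1)) := by
  induction k with
  | zero => intro j h; rw [cElt, map_one]; rfl
  | succ k ih =>
    intro j h
    have hjm : j < m := by omega
    rw [cElt, map_mul, Equiv.Perm.mul_apply]
    have hpt : (⟨j + (k + 1), by omega⟩ : Fin (m + 1)) = ⟨(j + 1) + k, by omega⟩ :=
      Fin.ext (by show j + (k + 1) = (j + 1) + k; omega)
    rw [hpt, ih (j + 1) (by omega)]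
    rw [sN, dif_pos hjm, phi_simple]
    have h1 : (⟨j, hjm⟩ : Fin m).castSucc = (⟨j, by omega⟩ : Fin (m + 1)) := Fin.ext rfl
    have h2 : (⟨j, hjm⟩ : Fin m).succ = (⟨j + 1, by omega⟩ : Fin (m + 1)) := Fin.ext rfl
    rw [h1, h2, Equiv.swap_apply_right]

lemma aZeroEq (w : (CoxeterMatrix.Aₙ 0).Group) : w = 1 := by
  induction w using (CoxeterMatrix.Aₙ 0).toCoxeterSystem.simple_induction with
  | simple i => exact i.elim0
  | one => rfl
  | mul w w' hw hw' => rw [hw, hw', one_mul]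

set_option maxHeartbeats 1000000 in
lemma phi_ker : ∀ m, ∀ w : (CoxeterMatrix.Aₙ m).Group, phi m w = 1 → w = 1 := by
  intro m
  induction m with
  | zero => intro w _; exact aZeroEq w
  | succ m ih =>
    intro w hw
    obtain ⟨j, hj, w', rfl⟩ := decomp m w
    have hfix : phi (m + 1) (iota m w') (Fin.last (m + 1)) = Fin.last (m + 1) := by
      have h0 := DFunLike.congr_fun (phi_iota m) w'
      simp only [MonoidHom.comp_apply] at h0
      rw [h0, emb_apply_last]
    have hlast : (Fin.last (m + 1) : Fin (m + 2)) = ⟨j + (m + 1 - j), by omega⟩ :=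
      Fin.ext (by show m + 1 = j + (m + 1 - j); omega)
    have heval : phi (m + 1) (cElt (m + 1) (m + 1 - j) j * iota m w') (Fin.last (m + 1))
        = ⟨j, by omega⟩ := by
      have e3 := phi_cElt (m + 1) (m + 1 - j) j (by omega)
      rw [← hlast] at e3
      rw [map_mul, Equiv.Perm.mul_apply, hfix, e3]
    rw [hw] at heval
    have hjval : j = m + 1 := by
      have := congrArg Fin.val heval
      simp only [Equiv.Perm.one_apply, Fin.val_last] at this
      omega
    subst hjval
    rw [Nat.sub_self, cElt, one_mul] at hw ⊢
    have hw' : phi m w' = 1 := by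
      have h0 := DFunLike.congr_fun (phi_iota m) w'
      simp only [MonoidHom.comp_apply] at h0
      rw [h0] at hw
      have h1 : emb m (phi m w') = emb m 1 := by rw [hw, map_one]
      exact Equiv.Perm.extendDomainHom_injective (finEquivSubtype m) h1
    rw [ih w' hw', map_one]

lemma phi_surj (m : ℕ) : Function.Surjective (phi m) := by
  intro π
  have hπ : π ∈ Submonoid.closure (Set.range fun i : Fin m => swap i.castSucc i.succ) := by
    rw [Equiv.Perm.mclosure_swap_castSucc_succ]; trivial
  have : π ∈ (phi m).range := by
    refine Submonoid.closure_induction ?_ ?_ ?_ hπ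
    · rintro x ⟨i, rfl⟩ 
      exact ⟨(CoxeterMatrix.Aₙ m).simple i, phi_simple m i⟩
    · exact one_mem _
    · intro x y _ _ hx hy; exact mul_mem hx hy
  exact this

/-- The isomorphism between the type-A Coxeter group and the symmetric group. -/
noncomputable def phiEquiv (m : ℕ) : (CoxeterMatrix.Aₙ m).Group ≃* Perm (Fin (m + 1)) :=
  MulEquiv.ofBijective (phi m)
    ⟨(injective_iff_map_eq_one (phi m)).mpr (phi_ker m), phi_surj m⟩

section Sigma

variable {X : Type*} [DecidableEq X] (r : X × X → X × X)

lemma sigmaMap_fst {n k : ℕ} (h1 : 1 ≤ k) (h2 : k < n) (f : Fin n → X) :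
    sigmaMap r n k f ⟨k - 1, Nat.sub_lt_of_lt h2⟩ = (r (f ⟨k - 1, Nat.sub_lt_of_lt h2⟩, f ⟨k, h2⟩)).1 := by
  rw [sigmaMap, dif_pos (show 1 ≤ k ∧ k < n from ⟨h1, h2⟩)]
  exact if_pos rfl

lemma sigmaMap_snd {n k : ℕ} (h1 : 1 ≤ k) (h2 : k < n) (f : Fin n → X) :
    sigmaMap r n k f ⟨k, h2⟩ = (r (f ⟨k - 1, Nat.sub_lt_of_lt h2⟩, f ⟨k, h2⟩)).2 := by
  rw [sigmaMap, dif_pos (show 1 ≤ k ∧ k < n from ⟨h1, h2⟩)]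
  rw [if_neg (fun h => by have := congrArg Fin.val h; simp only at this; omega), if_pos rfl]

lemma sigmaMap_other {n k : ℕ} (h1 : 1 ≤ k) (h2 : k < n) (f : Fin n → X) (j : Fin n)
    (hj1 : (j : ℕ) ≠ k - 1) (hj2 : (j : ℕ) ≠ k) :
    sigmaMap r n k f j = f j := by
  rw [sigmaMap, dif_pos (show 1 ≤ k ∧ k < n from ⟨h1, h2⟩)]
  rw [if_neg (fun h => hj1 (congrArg Fin.val h)), if_neg (fun h => hj2 (congrArg Fin.val h))]

lemma sigmaMap_invol {n k : ℕ} (hinv : r ∘ r = id) (f : Fin n → X) :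
    sigmaMap r n k (sigmaMap r n k f) = f := by
  have hr : ∀ ab : X × X, r (r ab) = ab := fun ab => congrFun hinv ab
  by_cases h : 1 ≤ k ∧ k < n
  · obtain ⟨h1, h2⟩ := h
    funext j
    have hpair : (sigmaMap r n k f ⟨k - 1, Nat.sub_lt_of_lt h2⟩, sigmaMap r n k f ⟨k, h2⟩)
        = r (f ⟨k - 1, Nat.sub_lt_of_lt h2⟩, f ⟨k, h2⟩) :=
      Prod.ext (sigmaMap_fst r h1 h2 f) (sigmaMap_snd r h1 h2 f)
    rcases eq_or_ne (j : ℕ) (k - 1) with hj | hj1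
    · have hjeq : j = ⟨k - 1, lt_of_le_of_lt (Nat.sub_le k 1) h2⟩ := Fin.ext hj
      rw [hjeq, sigmaMap_fst r h1 h2, hpair, hr]
    rcases eq_or_ne (j : ℕ) k with hj | hj2
    · have hjeq : j = ⟨k, h2⟩ := Fin.ext hj
      rw [hjeq, sigmaMap_snd r h1 h2, hpair, hr]
    · rw [sigmaMap_other r h1 h2 _ j hj1 hj2, sigmaMap_other r h1 h2 f j hj1 hj2]
  · rw [sigmaMap, dif_neg h, sigmaMap, dif_neg h]

lemma sigma_comm {n k l : ℕ} (h1 : 1 ≤ k) (h2 : k + 1 < l) (h3 : l < n) (f : Fin n → X) :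
    sigmaMap r n k (sigmaMap r n l f) = sigmaMap r n l (sigmaMap r n k f) := by
  have hk2 : k < n := by omega
  have hl1 : 1 ≤ l := by omega
  funext j
  have hkm : k - 1 < n := by omega
  have hlm : l - 1 < n := by omega
  rcases eq_or_ne (j : ℕ) (k - 1) with hj | hj1
  · have hjeq : j = ⟨k - 1, hkm⟩ := Fin.ext hj
    rw [hjeq, sigmaMap_fst r h1 hk2,
      sigmaMap_other r hl1 h3 f ⟨k - 1, hkm⟩ (show k - 1 ≠ l - 1 by omega)
        (show k - 1 ≠ l by omega),
      sigmaMap_other r hl1 h3 f ⟨k, hk2⟩ (show k ≠ l - 1 by omega) (show k ≠ l by omega),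
      sigmaMap_other r hl1 h3 _ ⟨k - 1, hkm⟩ (show k - 1 ≠ l - 1 by omega)
        (show k - 1 ≠ l by omega),
      sigmaMap_fst r h1 hk2]
  rcases eq_or_ne (j : ℕ) k with hj | hj2
  · have hjeq : j = ⟨k, hk2⟩ := Fin.ext hj
    rw [hjeq, sigmaMap_snd r h1 hk2,
      sigmaMap_other r hl1 h3 f ⟨k - 1, hkm⟩ (show k - 1 ≠ l - 1 by omega)
        (show k - 1 ≠ l by omega),
      sigmaMap_other r hl1 h3 f ⟨k, hk2⟩ (show k ≠ l - 1 by omega) (show k ≠ l by omega),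
      sigmaMap_other r hl1 h3 _ ⟨k, hk2⟩ (show k ≠ l - 1 by omega) (show k ≠ l by omega),
      sigmaMap_snd r h1 hk2]
  rcases eq_or_ne (j : ℕ) (l - 1) with hj | hj3
  · have hjeq : j = ⟨l - 1, hlm⟩ := Fin.ext hj
    rw [hjeq,
      sigmaMap_other r h1 hk2 _ ⟨l - 1, hlm⟩ (show l - 1 ≠ k - 1 by omega)
        (show l - 1 ≠ k by omega),
      sigmaMap_fst r hl1 h3, sigmaMap_fst r hl1 h3,
      sigmaMap_other r h1 hk2 f ⟨l - 1, hlm⟩ (show l - 1 ≠ k - 1 by omega)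
        (show l - 1 ≠ k by omega),
      sigmaMap_other r h1 hk2 f ⟨l, h3⟩ (show l ≠ k - 1 by omega) (show l ≠ k by omega)]
  rcases eq_or_ne (j : ℕ) l with hj | hj4
  · have hjeq : j = ⟨l, h3⟩ := Fin.ext hj
    rw [hjeq,
      sigmaMap_other r h1 hk2 _ ⟨l, h3⟩ (show l ≠ k - 1 by omega) (show l ≠ k by omega),
      sigmaMap_snd r hl1 h3, sigmaMap_snd r hl1 h3,
      sigmaMap_other r h1 hk2 f ⟨l - 1, hlm⟩ (show l - 1 ≠ k - 1 by omega)
        (show l - 1 ≠ k by omega),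
      sigmaMap_other r h1 hk2 f ⟨l, h3⟩ (show l ≠ k - 1 by omega) (show l ≠ k by omega)]
  · rw [sigmaMap_other r h1 hk2 _ j hj1 hj2, sigmaMap_other r hl1 h3 f j hj3 hj4,
      sigmaMap_other r hl1 h3 _ j hj3 hj4, sigmaMap_other r h1 hk2 f j hj1 hj2]

end Sigma

section SigmaBraid

variable {X : Type*} [DecidableEq X] (r : X × X → X × X)

lemma sigmaMap_fst_succ {n k : ℕ} (h2 : k + 1 < n) (f : Fin n → X) :
    sigmaMap r n (k + 1) f ⟨k, by omega⟩ = (r (f ⟨k, by omega⟩, f ⟨k + 1, h2⟩)).1 :=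
  sigmaMap_fst r (Nat.le_add_left 1 k) h2 f

lemma sigmaMap_snd_succ {n k : ℕ} (h2 : k + 1 < n) (f : Fin n → X) :
    sigmaMap r n (k + 1) f ⟨k + 1, h2⟩ = (r (f ⟨k, by omega⟩, f ⟨k + 1, h2⟩)).2 :=
  sigmaMap_snd r (Nat.le_add_left 1 k) h2 f

lemma sigmaMap_other_succ {n k : ℕ} (h2 : k + 1 < n) (f : Fin n → X) (j : Fin n)
    (hj1 : (j : ℕ) ≠ k) (hj2 : (j : ℕ) ≠ k + 1) :
    sigmaMap r n (k + 1) f j = f j :=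
  sigmaMap_other r (Nat.le_add_left 1 k) h2 f j hj1 hj2

lemma sigma_braid {n k : ℕ} (hYBE : SetTheoreticYBE r) (h1 : 1 ≤ k) (h2 : k + 1 < n)
    (f : Fin n → X) :
    sigmaMap r n k (sigmaMap r n (k + 1) (sigmaMap r n k f))
      = sigmaMap r n (k + 1) (sigmaMap r n k (sigmaMap r n (k + 1) f)) := by
  have hk : k < n := by omega
  have hp : k - 1 < n := by omega
  have hq1 : 1 ≤ k + 1 := by omega
  have hY := congrFun hYBE (f ⟨k - 1, hp⟩, f ⟨k, hk⟩, f ⟨k + 1, h2⟩)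
  simp only [Function.comp_apply, ybeLeg1, ybeLeg2, Prod.mk.injEq] at hY
  obtain ⟨hA, hBC⟩ := hY
  have hB := congrArg Prod.fst hBC
  have hC := congrArg Prod.snd hBC
  simp only at hB hC
  funext j
  rcases eq_or_ne (j : ℕ) (k - 1) with hj | hj1
  · have hjeq : j = ⟨k - 1, hp⟩ := Fin.ext hj
    rw [hjeq]
    have hL : sigmaMap r n k (sigmaMap r n (k + 1) (sigmaMap r n k f)) ⟨k - 1, hp⟩
        = (r ((r (f ⟨k - 1, hp⟩, f ⟨k, hk⟩)).1,
            (r ((r (f ⟨k - 1, hp⟩, f ⟨k, hk⟩)).2, f ⟨k + 1, h2⟩)).1)).1 := by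
      rw [sigmaMap_fst r h1 hk,
        sigmaMap_other_succ r h2 _ ⟨k - 1, hp⟩ (show k - 1 ≠ k by omega)
          (show k - 1 ≠ k + 1 by omega),
        sigmaMap_fst_succ r h2,
        sigmaMap_fst r h1 hk,
        sigmaMap_snd r h1 hk,
        sigmaMap_other r h1 hk f ⟨k + 1, h2⟩ (show k + 1 ≠ k - 1 by omega)
          (show k + 1 ≠ k by omega)]
    have hR : sigmaMap r n (k + 1) (sigmaMap r n k (sigmaMap r n (k + 1) f)) ⟨k - 1, hp⟩
        = (r (f ⟨k - 1, hp⟩, (r (f ⟨k, hk⟩, f ⟨k + 1, h2⟩)).1)).1 := by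
      rw [sigmaMap_other_succ r h2 _ ⟨k - 1, hp⟩ (show k - 1 ≠ k by omega)
          (show k - 1 ≠ k + 1 by omega),
        sigmaMap_fst r h1 hk,
        sigmaMap_other_succ r h2 f ⟨k - 1, hp⟩ (show k - 1 ≠ k by omega)
          (show k - 1 ≠ k + 1 by omega),
        sigmaMap_fst_succ r h2]
    rw [hL, hR]
    exact hA
  rcases eq_or_ne (j : ℕ) k with hj | hj2
  · have hjeq : j = ⟨k, hk⟩ := Fin.ext hj
    rw [hjeq]
    have hL : sigmaMap r n k (sigmaMap r n (k + 1) (sigmaMap r n k f)) ⟨k, hk⟩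
        = (r ((r (f ⟨k - 1, hp⟩, f ⟨k, hk⟩)).1,
            (r ((r (f ⟨k - 1, hp⟩, f ⟨k, hk⟩)).2, f ⟨k + 1, h2⟩)).1)).2 := by
      rw [sigmaMap_snd r h1 hk,
        sigmaMap_other_succ r h2 _ ⟨k - 1, hp⟩ (show k - 1 ≠ k by omega)
          (show k - 1 ≠ k + 1 by omega),
        sigmaMap_fst_succ r h2,
        sigmaMap_fst r h1 hk,
        sigmaMap_snd r h1 hk,
        sigmaMap_other r h1 hk f ⟨k + 1, h2⟩ (show k + 1 ≠ k - 1 by omega)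
          (show k + 1 ≠ k by omega)]
    have hR : sigmaMap r n (k + 1) (sigmaMap r n k (sigmaMap r n (k + 1) f)) ⟨k, hk⟩
        = (r ((r (f ⟨k - 1, hp⟩, (r (f ⟨k, hk⟩, f ⟨k + 1, h2⟩)).1)).2,
            (r (f ⟨k, hk⟩, f ⟨k + 1, h2⟩)).2)).1 := by
      rw [sigmaMap_fst_succ r h2,
        sigmaMap_snd r h1 hk,
        sigmaMap_other r h1 hk _ ⟨k + 1, h2⟩ (show k + 1 ≠ k - 1 by omega)
          (show k + 1 ≠ k by omega),
        sigmaMap_other_succ r h2 f ⟨k - 1, hp⟩ (show k - 1 ≠ k by omega)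
          (show k - 1 ≠ k + 1 by omega),
        sigmaMap_fst_succ r h2,
        sigmaMap_snd_succ r h2]
    rw [hL, hR]
    exact hB
  rcases eq_or_ne (j : ℕ) (k + 1) with hj | hj3
  · have hjeq : j = ⟨k + 1, h2⟩ := Fin.ext hj
    rw [hjeq]
    have hL : sigmaMap r n k (sigmaMap r n (k + 1) (sigmaMap r n k f)) ⟨k + 1, h2⟩
        = (r ((r (f ⟨k - 1, hp⟩, f ⟨k, hk⟩)).2, f ⟨k + 1, h2⟩)).2 := by
      rw [sigmaMap_other r h1 hk _ ⟨k + 1, h2⟩ (show k + 1 ≠ k - 1 by omega)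
          (show k + 1 ≠ k by omega),
        sigmaMap_snd_succ r h2,
        sigmaMap_snd r h1 hk,
        sigmaMap_other r h1 hk f ⟨k + 1, h2⟩ (show k + 1 ≠ k - 1 by omega)
          (show k + 1 ≠ k by omega)]
    have hR : sigmaMap r n (k + 1) (sigmaMap r n k (sigmaMap r n (k + 1) f)) ⟨k + 1, h2⟩
        = (r ((r (f ⟨k - 1, hp⟩, (r (f ⟨k, hk⟩, f ⟨k + 1, h2⟩)).1)).2,
            (r (f ⟨k, hk⟩, f ⟨k + 1, h2⟩)).2)).2 := by
      rw [sigmaMap_snd_succ r h2,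
        sigmaMap_snd r h1 hk,
        sigmaMap_other r h1 hk _ ⟨k + 1, h2⟩ (show k + 1 ≠ k - 1 by omega)
          (show k + 1 ≠ k by omega),
        sigmaMap_other_succ r h2 f ⟨k - 1, hp⟩ (show k - 1 ≠ k by omega)
          (show k - 1 ≠ k + 1 by omega),
        sigmaMap_fst_succ r h2,
        sigmaMap_snd_succ r h2]
    rw [hL, hR]
    exact hC
  · rw [sigmaMap_other r h1 hk _ j hj1 hj2,
      sigmaMap_other_succ r h2 _ j hj2 hj3,
      sigmaMap_other r h1 hk _ j hj1 hj2,
      sigmaMap_other_succ r h2 _ j hj2 hj3,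
      sigmaMap_other r h1 hk _ j hj1 hj2,
      sigmaMap_other_succ r h2 f j hj2 hj3]

end SigmaBraid

section Final

variable {X : Type*} [DecidableEq X] (r : X × X → X × X)

/-- `σ_k` as a permutation of `Fin n → X`. -/
def sigmaPerm (hinv : r ∘ r = id) (n k : ℕ) : Perm (Fin n → X) where
  toFun := sigmaMap r n k
  invFun := sigmaMap r n k
  left_inv f := sigmaMap_invol r hinv f
  right_inv f := sigmaMap_invol r hinv f

lemma sigmaLiftable (hYBE : SetTheoreticYBE r) (hinv : r ∘ r = id) (m : ℕ) :
    (CoxeterMatrix.Aₙ m).IsLiftable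
      (fun i : Fin m => sigmaPerm r hinv (m + 1) ((i : ℕ) + 1)) := by
  apply isLiftable_A
  · intro i
    apply Equiv.ext; intro f
    show sigmaMap r (m + 1) ((i : ℕ) + 1) (sigmaMap r (m + 1) ((i : ℕ) + 1) f) = f
    exact sigmaMap_invol r hinv f
  · intro i j hij
    apply Equiv.ext; intro f
    show sigmaMap r (m + 1) ((i : ℕ) + 1)
        (sigmaMap r (m + 1) ((j : ℕ) + 1) (sigmaMap r (m + 1) ((i : ℕ) + 1) f))
      = sigmaMap r (m + 1) ((j : ℕ) + 1)
        (sigmaMap r (m + 1) ((i : ℕ) + 1) (sigmaMap r (m + 1) ((j : ℕ) + 1) f))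
    have hj : (j : ℕ) + 1 = ((i : ℕ) + 1) + 1 := by omega
    rw [hj]
    exact sigma_braid r hYBE (by omega) (by omega : (i : ℕ) + 1 + 1 < m + 1) f
  · intro i j hij
    apply Equiv.ext; intro f
    show sigmaMap r (m + 1) ((i : ℕ) + 1) (sigmaMap r (m + 1) ((j : ℕ) + 1) f)
      = sigmaMap r (m + 1) ((j : ℕ) + 1) (sigmaMap r (m + 1) ((i : ℕ) + 1) f)
    exact sigma_comm r (by omega) (by omega) (by omega) f

end Final

end YbeAux

/-- for an involutive set-theoretic solution `r` of the YBE on a nonempty finite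
set `X` and `n ≥ 2`, there is a group homomorphism `ρ : Equiv.Perm (Fin n) → Equiv.Perm (Fin n → X)`
sending the adjacent transposition of `k-1` and `k` to `σ_k` for every `1 ≤ k ≤ n - 1`. -/
theorem exists_symmetricGroup_hom_of_involutive_ybe
    {X : Type*} [Fintype X] [DecidableEq X] [Nonempty X]
    (r : X × X → X × X) (hYBE : SetTheoreticYBE r) (hinv : r ∘ r = id)
    (n : ℕ) (hn : 2 ≤ n) :
    ∃ ρ : Equiv.Perm (Fin n) →* Equiv.Perm (Fin n → X),
      ∀ (k : ℕ) (h1 : 1 ≤ k) (h2 : k < n),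
        ⇑(ρ (Equiv.swap (⟨k - 1, by omega⟩ : Fin n) ⟨k, h2⟩)) = sigmaMap r n k := by
  obtain ⟨m, rfl⟩ : ∃ m, n = m + 1 := ⟨n - 1, by omega⟩
  classical
  let psi : (CoxeterMatrix.Aₙ m).Group →* Equiv.Perm (Fin (m + 1) → X) :=
    (CoxeterMatrix.Aₙ m).toCoxeterSystem.lift
      ⟨fun i : Fin m => YbeAux.sigmaPerm r hinv (m + 1) ((i : ℕ) + 1),
        YbeAux.sigmaLiftable r hYBE hinv m⟩
  refine ⟨psi.comp (YbeAux.phiEquiv m).symm.toMonoidHom, ?_⟩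
  intro k h1 h2
  have hkm : k - 1 < m := by omega
  set i : Fin m := ⟨k - 1, hkm⟩ with hi
  have e1 : (⟨k - 1, by omega⟩ : Fin (m + 1)) = i.castSucc := Fin.ext rfl
  have e2 : (⟨k, h2⟩ : Fin (m + 1)) = i.succ := Fin.ext (by show k = k - 1 + 1; omega)
  have hswap : Equiv.swap (⟨k - 1, by omega⟩ : Fin (m + 1)) ⟨k, h2⟩
      = Equiv.swap i.castSucc i.succ := by rw [e1, e2]
  have hsymm : (YbeAux.phiEquiv m).symm (Equiv.swap i.castSucc i.succ)
      = (CoxeterMatrix.Aₙ m).simple i := by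
    rw [MulEquiv.symm_apply_eq]
    exact (YbeAux.phi_simple m i).symm
  show ⇑(psi ((YbeAux.phiEquiv m).symm
      (Equiv.swap (⟨k - 1, by omega⟩ : Fin (m + 1)) ⟨k, h2⟩))) = sigmaMap r (m + 1) k
  rw [hswap, hsymm]
  have hlift := (CoxeterMatrix.Aₙ m).toCoxeterSystem.lift_apply_simple
    (YbeAux.sigmaLiftable r hYBE hinv m) i
  show ⇑(psi ((CoxeterMatrix.Aₙ m).toCoxeterSystem.simple i)) = sigmaMap r (m + 1) k
  rw [hlift]
  show sigmaMap r (m + 1) ((i : ℕ) + 1) = sigmaMap r (m + 1) k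
  have : (i : ℕ) + 1 = k := by show k - 1 + 1 = k; omega
  rw [this]
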